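/- Call a matrix in M₄(ℂ) block diagonal if its (k,l)-entry vanishes whenever one of k, l lies in {0,1} and the other in {2,3}. With T^{ab} := −(i/4)[γ_L^a, γ_L^b] and X^+ := γ^0 X† γ^0, the following hold: (i) every spin representation matrix S = exp((i/2) Σ_{a,b} t_{ab} T^{ab}) with t : Fin 4 → Fin 4 → ℝ is block diagonal; (ii) γ^0 itself is ρ-unitary ((γ^0)^+ γ^0 = γ^0 (γ^0)^+ = I) but not block diagonal. Consequently the set of spin representations of Lorentz transformations is a proper subset of the ρ-unitary matrices in M₄(ℂ). -/

import Mathlib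

open Matrix

/-- The chiral Euclidean Dirac matrices on ℝ⁴:
`γ^a = fromBlocks 0 σ^a σ̃^a 0` with `σ^0 = σ̃^0 = I₂`, `σ^j = −iσⱼ`, `σ̃^j = iσⱼ`. -/
noncomputable def γE : Fin 4 → Matrix (Fin 4) (Fin 4) ℂ :=
  ![!![0, 0, 1, 0; 0, 0, 0, 1; 1, 0, 0, 0; 0, 1, 0, 0],
    !![0, 0, 0, -Complex.I; 0, 0, -Complex.I, 0;
       0, Complex.I, 0, 0; Complex.I, 0, 0, 0],
    !![0, 0, 0, -1; 0, 0, 1, 0; 0, 1, 0, 0; -1, 0, 0, 0],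
    !![0, 0, -Complex.I, 0; 0, 0, 0, Complex.I;
       Complex.I, 0, 0, 0; 0, -Complex.I, 0, 0]]

/-- The Lorentzian Dirac matrices: `γ_L^0 = γ^0` and `γ_L^j = i γ^j` for `j = 1,2,3`. -/
noncomputable def γL : Fin 4 → Matrix (Fin 4) (Fin 4) ℂ :=
  ![γE 0, Complex.I • γE 1, Complex.I • γE 2, Complex.I • γE 3]

/-- The Lorentz generators `T^{ab} = −(i/4)[γ_L^a, γ_L^b]`. -/
noncomputable def Tgen (a b : Fin 4) : Matrix (Fin 4) (Fin 4) ℂ :=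
  (-(Complex.I / 4)) • (γL a * γL b - γL b * γL a)

/-- The ρ-adjoint `X⁺ := γ^0 X† γ^0` for the twisted product implemented by `γ^0`. -/
noncomputable def rhoAdj (X : Matrix (Fin 4) (Fin 4) ℂ) : Matrix (Fin 4) (Fin 4) ℂ :=
  γE 0 * Xᴴ * γE 0

/-- A matrix in `M₄(ℂ)` is block diagonal if its `(k,l)` entry vanishes whenever one of
`k, l` lies in `{0,1}` and the other in `{2,3}`. -/
def BlockDiag4 (X : Matrix (Fin 4) (Fin 4) ℂ) : Prop :=
  ∀ k l : Fin 4,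
    (((k : ℕ) < 2 ∧ 2 ≤ (l : ℕ)) ∨ (2 ≤ (k : ℕ) ∧ (l : ℕ) < 2)) → X k l = 0

set_option maxHeartbeats 2000000

/-- the grading matrix -/
noncomputable def Pm : Matrix (Fin 4) (Fin 4) ℂ := Matrix.diagonal ![1, 1, -1, -1]

lemma g00 : γE 0 * γE 0 = 1 := by
  ext i j
  fin_cases i <;> fin_cases j <;>
    simp [γE, Matrix.mul_apply, Fin.sum_univ_four, Matrix.one_apply,
      Matrix.vecHead, Matrix.vecTail]

lemma g00' (Z : Matrix (Fin 4) (Fin 4) ℂ) : γE 0 * (γE 0 * Z) = Z := by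
  rw [← Matrix.mul_assoc, g00, Matrix.one_mul]

lemma gherm (a : Fin 4) : (γE a)ᴴ = γE a := by
  ext i j
  fin_cases a <;> fin_cases i <;> fin_cases j <;>
    simp [γE, Matrix.conjTranspose_apply, Matrix.vecHead, Matrix.vecTail]

lemma ganti1 : γE 0 * γE 1 * γE 0 = -γE 1 := by
  ext i k
  fin_cases i <;> fin_cases k <;>
    simp [γE, Matrix.mul_apply, Fin.sum_univ_four, Matrix.vecHead, Matrix.vecTail,
      Matrix.neg_apply]

lemma ganti2 : γE 0 * γE 2 * γE 0 = -γE 2 := by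
  ext i k
  fin_cases i <;> fin_cases k <;>
    simp [γE, Matrix.mul_apply, Fin.sum_univ_four, Matrix.vecHead, Matrix.vecTail,
      Matrix.neg_apply]

lemma ganti3 : γE 0 * γE 3 * γE 0 = -γE 3 := by
  ext i k
  fin_cases i <;> fin_cases k <;>
    simp [γE, Matrix.mul_apply, Fin.sum_univ_four, Matrix.vecHead, Matrix.vecTail,
      Matrix.neg_apply]

lemma PP : Pm * Pm = 1 := by
  ext i j
  fin_cases i <;> fin_cases j <;>
    simp [Pm, Matrix.mul_apply, Fin.sum_univ_four, Matrix.one_apply,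
      Matrix.diagonal, Matrix.vecHead, Matrix.vecTail]

lemma PP' (Z : Matrix (Fin 4) (Fin 4) ℂ) : Pm * (Pm * Z) = Z := by
  rw [← Matrix.mul_assoc, PP, Matrix.one_mul]

lemma pgp (a : Fin 4) : Pm * γE a * Pm = -γE a := by
  fin_cases a <;>
  · ext i k
    fin_cases i <;> fin_cases k <;>
      simp [Pm, γE, Matrix.mul_apply, Fin.sum_univ_four, Matrix.vecHead, Matrix.vecTail,
        Matrix.neg_apply, Matrix.diagonal]

lemma γL0 : γL 0 = γE 0 := rfl
lemma γL1 : γL 1 = Complex.I • γE 1 := rfl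
lemma γL2 : γL 2 = Complex.I • γE 2 := rfl
lemma γL3 : γL 3 = Complex.I • γE 3 := rfl

lemma pgpL (a : Fin 4) : Pm * γL a * Pm = -γL a := by
  fin_cases a
  · show Pm * γL 0 * Pm = -γL 0
    rw [γL0]; exact pgp 0
  · show Pm * γL 1 * Pm = -γL 1
    rw [γL1, Matrix.mul_smul, Matrix.smul_mul, pgp]; simp
  · show Pm * γL 2 * Pm = -γL 2
    rw [γL2, Matrix.mul_smul, Matrix.smul_mul, pgp]; simp
  · show Pm * γL 3 * Pm = -γL 3
    rw [γL3, Matrix.mul_smul, Matrix.smul_mul, pgp]; simp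

lemma commute_P_of_conj {X : Matrix (Fin 4) (Fin 4) ℂ} (h : Pm * X * Pm = X) :
    Pm * X = X * Pm := by
  have h2 := congrArg (· * Pm) h
  rw [Matrix.mul_assoc (Pm * X), PP, Matrix.mul_one] at h2
  exact h2

lemma commute_P_TL (a b : Fin 4) : Pm * (γL a * γL b) = (γL a * γL b) * Pm := by
  apply commute_P_of_conj
  have : Pm * (γL a * γL b) * Pm = (Pm * γL a * Pm) * (Pm * γL b * Pm) := by
    simp only [Matrix.mul_assoc, PP']
  rw [this, pgpL, pgpL, Matrix.neg_mul, Matrix.mul_neg, neg_neg]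

lemma commute_P_Tgen (a b : Fin 4) : Pm * Tgen a b = Tgen a b * Pm := by
  unfold Tgen
  rw [Matrix.mul_smul, Matrix.smul_mul, Matrix.mul_sub, Matrix.sub_mul,
    commute_P_TL, commute_P_TL]

lemma self_eq_neg_zero {x : ℂ} (h : x = -x) : x = 0 := by linear_combination h / 2
lemma neg_eq_self_zero {x : ℂ} (h : -x = x) : x = 0 := by linear_combination -h / 2

lemma blockdiag_of_commute {X : Matrix (Fin 4) (Fin 4) ℂ} (h : Pm * X = X * Pm) :
    BlockDiag4 X := by
  intro k l hkl
  have hx := congrFun (congrFun h k) l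
  rw [show (Pm * X) k l = Pm k k * X k l from by
        simp [Pm, Matrix.diagonal_mul],
      show (X * Pm) k l = X k l * Pm l l from by
        simp [Pm, Matrix.mul_diagonal]] at hx
  fin_cases k <;> fin_cases l <;>
    first
      | exact absurd hkl (by decide)
      | (simp [Pm, Matrix.diagonal, Matrix.vecHead, Matrix.vecTail] at hx
         exact self_eq_neg_zero hx)
      | (simp [Pm, Matrix.diagonal, Matrix.vecHead, Matrix.vecTail] at hx
         exact neg_eq_self_zero hx)

lemma rhoAdj_mul (X Y : Matrix (Fin 4) (Fin 4) ℂ) :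
    rhoAdj (X * Y) = rhoAdj Y * rhoAdj X := by
  unfold rhoAdj
  rw [Matrix.conjTranspose_mul]
  simp only [Matrix.mul_assoc, g00']

lemma rhoAdj_smul (c : ℂ) (X : Matrix (Fin 4) (Fin 4) ℂ) :
    rhoAdj (c • X) = (starRingEnd ℂ) c • rhoAdj X := by
  simp [rhoAdj, Matrix.conjTranspose_smul, Matrix.mul_smul, Matrix.smul_mul]

lemma rhoAdj_sub (X Y : Matrix (Fin 4) (Fin 4) ℂ) :
    rhoAdj (X - Y) = rhoAdj X - rhoAdj Y := by
  simp [rhoAdj, Matrix.conjTranspose_sub, Matrix.sub_mul, Matrix.mul_sub]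

lemma rhoAdj_sum {ι : Type*} (s : Finset ι) (f : ι → Matrix (Fin 4) (Fin 4) ℂ) :
    rhoAdj (∑ i ∈ s, f i) = ∑ i ∈ s, rhoAdj (f i) := by
  simp [rhoAdj, Matrix.conjTranspose_sum, Finset.sum_mul, Finset.mul_sum]

lemma rhoAdj_γL (a : Fin 4) : rhoAdj (γL a) = γL a := by
  fin_cases a
  · show rhoAdj (γL 0) = γL 0
    rw [γL0]; unfold rhoAdj
    rw [gherm, Matrix.mul_assoc, g00, Matrix.mul_one]
  · show rhoAdj (γL 1) = γL 1
    rw [γL1, rhoAdj_smul]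
    unfold rhoAdj
    rw [gherm, ganti1]
    simp [Complex.conj_I]
  · show rhoAdj (γL 2) = γL 2
    rw [γL2, rhoAdj_smul]
    unfold rhoAdj
    rw [gherm, ganti2]
    simp [Complex.conj_I]
  · show rhoAdj (γL 3) = γL 3
    rw [γL3, rhoAdj_smul]
    unfold rhoAdj
    rw [gherm, ganti3]
    simp [Complex.conj_I]

lemma rhoAdj_Tgen (a b : Fin 4) : rhoAdj (Tgen a b) = Tgen a b := by
  unfold Tgen
  rw [rhoAdj_smul, rhoAdj_sub, rhoAdj_mul, rhoAdj_mul, rhoAdj_γL, rhoAdj_γL]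
  have hc : (starRingEnd ℂ) (-(Complex.I / 4)) = Complex.I / 4 := by
    rw [map_neg, map_div₀, Complex.conj_I]; simp [Complex.conj_ofNat]; ring
  rw [hc]
  module

lemma γ0_unit : IsUnit (γE 0) := ⟨⟨γE 0, γE 0, g00, g00⟩, rfl⟩

lemma γ0_inv : (γE 0)⁻¹ = γE 0 := Matrix.inv_eq_right_inv g00

lemma rhoAdj_exp (A : Matrix (Fin 4) (Fin 4) ℂ) :
    rhoAdj (NormedSpace.exp A) = NormedSpace.exp (rhoAdj A) := by
  unfold rhoAdj
  rw [← Matrix.exp_conjTranspose]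
  calc γE 0 * NormedSpace.exp Aᴴ * γE 0
      = γE 0 * NormedSpace.exp Aᴴ * (γE 0)⁻¹ := by rw [γ0_inv]
    _ = NormedSpace.exp (γE 0 * Aᴴ * (γE 0)⁻¹) := (Matrix.exp_conj _ _ γ0_unit).symm
    _ = NormedSpace.exp (γE 0 * Aᴴ * γE 0) := by rw [γ0_inv]

lemma rhoAdj_argA (t : Fin 4 → Fin 4 → ℝ) :
    rhoAdj ((Complex.I / 2) • ∑ a : Fin 4, ∑ b : Fin 4, (t a b : ℂ) • Tgen a b) =
      -((Complex.I / 2) • ∑ a : Fin 4, ∑ b : Fin 4, (t a b : ℂ) • Tgen a b) := by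
  rw [rhoAdj_smul, rhoAdj_sum]
  have hs : ∀ a : Fin 4, rhoAdj (∑ b : Fin 4, (t a b : ℂ) • Tgen a b)
      = ∑ b : Fin 4, (t a b : ℂ) • Tgen a b := by
    intro a
    rw [rhoAdj_sum]
    refine Finset.sum_congr rfl fun b _ => ?_
    rw [rhoAdj_smul, rhoAdj_Tgen, Complex.conj_ofReal]
  simp only [hs]
  have hc : (starRingEnd ℂ) (Complex.I / 2) = -(Complex.I / 2) := by
    rw [map_div₀, Complex.conj_I]; simp [Complex.conj_ofNat]; ring
  rw [hc, neg_smul]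

lemma exp_rho_unitary (A : Matrix (Fin 4) (Fin 4) ℂ) (hA : rhoAdj A = -A) :
    rhoAdj (NormedSpace.exp A) * NormedSpace.exp A = 1 ∧
    NormedSpace.exp A * rhoAdj (NormedSpace.exp A) = 1 := by
  rw [rhoAdj_exp, hA]
  constructor
  · rw [← Matrix.exp_add_of_commute (-A) A ((Commute.refl A).neg_left)]
    simp [NormedSpace.exp_zero]
  · rw [← Matrix.exp_add_of_commute A (-A) ((Commute.refl A).neg_right)]
    simp [NormedSpace.exp_zero]

lemma blockdiag_exp (t : Fin 4 → Fin 4 → ℝ) :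
    BlockDiag4 (NormedSpace.exp
      ((Complex.I / 2) • ∑ a : Fin 4, ∑ b : Fin 4, (t a b : ℂ) • Tgen a b)) := by
  set A := (Complex.I / 2) • ∑ a : Fin 4, ∑ b : Fin 4, (t a b : ℂ) • Tgen a b with hAdef
  have hPA : Pm * A = A * Pm := by
    rw [hAdef, Matrix.mul_smul, Matrix.smul_mul, Finset.mul_sum, Finset.sum_mul]
    congr 1
    refine Finset.sum_congr rfl fun a _ => ?_
    rw [Finset.mul_sum, Finset.sum_mul]
    refine Finset.sum_congr rfl fun b _ => ?_
    rw [Matrix.mul_smul, Matrix.smul_mul, commute_P_Tgen]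
  apply blockdiag_of_commute
  have hPunit : IsUnit Pm := ⟨⟨Pm, Pm, PP, PP⟩, rfl⟩
  have hPinv : Pm⁻¹ = Pm := Matrix.inv_eq_right_inv PP
  have key : Pm * NormedSpace.exp A * Pm = NormedSpace.exp A := by
    calc Pm * NormedSpace.exp A * Pm
        = Pm * NormedSpace.exp A * Pm⁻¹ := by rw [hPinv]
      _ = NormedSpace.exp (Pm * A * Pm⁻¹) := (Matrix.exp_conj _ _ hPunit).symm
      _ = NormedSpace.exp A := by
          rw [hPinv, hPA, Matrix.mul_assoc, PP, Matrix.mul_one]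
  exact commute_P_of_conj key


/-- Every spin representation of a Lorentz transformation is block diagonal, while
`γ^0` is ρ-unitary but not block diagonal; consequently the spin representations of
Lorentz transformations form a proper subset of the ρ-unitary matrices. -/
theorem statement16 :
    (∀ t : Fin 4 → Fin 4 → ℝ,
      BlockDiag4 (NormedSpace.exp
        ((Complex.I / 2) • ∑ a : Fin 4, ∑ b : Fin 4, (t a b : ℂ) • Tgen a b))) ∧
    (rhoAdj (γE 0) * γE 0 = 1 ∧ γE 0 * rhoAdj (γE 0) = 1 ∧ ¬ BlockDiag4 (γE 0)) ∧
    {S : Matrix (Fin 4) (Fin 4) ℂ |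
        ∃ t : Fin 4 → Fin 4 → ℝ,
          S = NormedSpace.exp
            ((Complex.I / 2) • ∑ a : Fin 4, ∑ b : Fin 4, (t a b : ℂ) • Tgen a b)} ⊂
      {X : Matrix (Fin 4) (Fin 4) ℂ | rhoAdj X * X = 1 ∧ X * rhoAdj X = 1} := by
  have hrho0 : rhoAdj (γE 0) = γE 0 := by
    have := rhoAdj_γL 0
    rwa [γL0] at this
  have hnotbd : ¬ BlockDiag4 (γE 0) := by
    intro h
    have h02 := h 0 2 (by norm_num)
    simp [γE, Matrix.vecHead, Matrix.vecTail] at h02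
  refine ⟨blockdiag_exp, ⟨by rw [hrho0]; exact g00, by rw [hrho0]; exact g00, hnotbd⟩, ?_⟩
  have hsub : {S : Matrix (Fin 4) (Fin 4) ℂ |
        ∃ t : Fin 4 → Fin 4 → ℝ,
          S = NormedSpace.exp
            ((Complex.I / 2) • ∑ a : Fin 4, ∑ b : Fin 4, (t a b : ℂ) • Tgen a b)} ⊆
      {X : Matrix (Fin 4) (Fin 4) ℂ | rhoAdj X * X = 1 ∧ X * rhoAdj X = 1} := by
    rintro S ⟨t, rfl⟩
    exact exp_rho_unitary _ (rhoAdj_argA t)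
  refine (Set.ssubset_iff_of_subset hsub).mpr ⟨γE 0, ⟨by rw [hrho0]; exact g00,
    by rw [hrho0]; exact g00⟩, ?_⟩
  rintro ⟨t, hγt⟩
  exact hnotbd (hγt ▸ blockdiag_exp t)
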